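/- Let n ≥ 2 and let G be the anticycle on the n+3 vertices x, z_1, z_2, y_1,…,y_n. Then neither x y_1^2 z_1 nor x y_n^2 z_2 belongs to I(G)^2. -/
import Mathlib


open MvPolynomial

/-! The anticycle `G` on the `n+3` vertices `x, z₁, y₁, …, y_n, z₂`, realized on `Fin (n+3)`
with the cycle labeling `x = 0`, `z₁ = 1`, `y_i = i+1` (so `y_i` has index `i+2` for the
0-indexed `i : Fin n`), `z₂ = n+2`.  The non-edges of `G` are exactly the consecutive pairs
on the cycle `x ∼ z₁ ∼ y₁ ∼ ⋯ ∼ y_n ∼ z₂ ∼ x`. -/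

/-- The vertex `x`. -/
def vx (n : ℕ) : Fin (n + 3) := ⟨0, by omega⟩
/-- The vertex `z₁`. -/
def vz1 (n : ℕ) : Fin (n + 3) := ⟨1, by omega⟩
/-- The vertex `z₂`. -/
def vz2 (n : ℕ) : Fin (n + 3) := ⟨n + 2, by omega⟩
/-- The vertex `y_i` (0-indexed: `vy n i` is `y_{i+1}` of the paper). -/
def vy (n : ℕ) (i : Fin n) : Fin (n + 3) := ⟨(i : ℕ) + 2, by omega⟩

/-- Adjacency in the anticycle (complement of the `N`-cycle) on `Fin N`:
two distinct vertices are adjacent iff they are not consecutive on the cycle (mod `N`). -/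
def anticycleAdj (N : ℕ) (a b : Fin N) : Prop :=
  a ≠ b ∧ ((a : ℕ) + 1) % N ≠ (b : ℕ) ∧ ((b : ℕ) + 1) % N ≠ (a : ℕ)

/-- The edge ideal `I(G)` of the anticycle on `Fin N`. -/
noncomputable def anticycleIdeal (K : Type*) [Field K] (N : ℕ) :
    Ideal (MvPolynomial (Fin N) K) :=
  Ideal.span { m | ∃ a b : Fin N, anticycleAdj N a b ∧ m = X a * X b }

lemma anticycleIdeal_sq (K : Type*) [Field K] (N : ℕ) :
    anticycleIdeal K N ^ 2 = Ideal.span ((fun s => monomial s (1 : K)) ''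
      {d | ∃ a b c e : Fin N, anticycleAdj N a b ∧ anticycleAdj N c e ∧
        d = (Finsupp.single a 1 + Finsupp.single b 1) + (Finsupp.single c 1 + Finsupp.single e 1)}) := by
  rw [sq, anticycleIdeal, Ideal.span_mul_span']
  congr 1
  ext m
  constructor
  · rintro ⟨p, ⟨a, b, hab, rfl⟩, q, ⟨c, e, hce, rfl⟩, rfl⟩
    exact ⟨_, ⟨a, b, c, e, hab, hce, rfl⟩, by simp [X, monomial_mul]⟩
  · rintro ⟨d, ⟨a, b, c, e, hab, hce, rfl⟩, rfl⟩
    exact ⟨_, ⟨a, b, hab, rfl⟩, _, ⟨c, e, hce, rfl⟩, by simp [X, monomial_mul]⟩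

lemma not_mem_sq_aux (K : Type*) [Field K] (N : ℕ) (p q r : Fin N)
    (hpq : p ≠ q) (hpr : p ≠ r) (hqr : q ≠ r)
    (hadj : ∀ a b : Fin N, anticycleAdj N a b → (a = p ∨ a = q ∨ a = r) →
      (b = p ∨ b = q ∨ b = r) → ((a = p ∧ b = q) ∨ (a = q ∧ b = p))) :
    (X p * X q * X q * X r : MvPolynomial (Fin N) K) ∉ anticycleIdeal K N ^ 2 := by
  intro h
  have hm : (X p * X q * X q * X r : MvPolynomial (Fin N) K) =
      monomial (Finsupp.single p 1 + Finsupp.single q 1 + Finsupp.single q 1 +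
        Finsupp.single r 1) 1 := by
    simp [X, monomial_mul]
  rw [anticycleIdeal_sq, hm, mem_ideal_span_monomial_image] at h
  obtain ⟨d, ⟨a, b, c, e, hab, hce, rfl⟩, hle⟩ := h _ (by
    classical
    rw [support_monomial, if_neg one_ne_zero]
    exact Finset.mem_singleton_self _)
  have hle' := Finsupp.le_def.mp hle
  have hsup : ∀ v : Fin N, (1:ℕ) ≤ (((Finsupp.single a 1 + Finsupp.single b 1) +
      (Finsupp.single c 1 + Finsupp.single e 1) : Fin N →₀ ℕ)) v → (v = p ∨ v = q ∨ v = r) := by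
    intro v hv
    by_contra hcon
    push_neg at hcon
    have h2 := le_trans hv (hle' v)
    simp [Finsupp.single_apply, (Ne.symm hcon.1), (Ne.symm hcon.2.1), (Ne.symm hcon.2.2)] at h2
  have hmema : a = p ∨ a = q ∨ a = r := by
    refine hsup a ?_
    simp only [Finsupp.add_apply, Finsupp.single_apply]; split_ifs <;> omega
  have hmemb : b = p ∨ b = q ∨ b = r := by
    refine hsup b ?_
    simp only [Finsupp.add_apply, Finsupp.single_apply]; split_ifs <;> omega
  have hmemc : c = p ∨ c = q ∨ c = r := by
    refine hsup c ?_
    simp only [Finsupp.add_apply, Finsupp.single_apply]; split_ifs <;> omega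
  have hmeme : e = p ∨ e = q ∨ e = r := by
    refine hsup e ?_
    simp only [Finsupp.add_apply, Finsupp.single_apply]; split_ifs <;> omega
  have h1 := hadj a b hab hmema hmemb
  have h2 := hadj c e hce hmemc hmeme
  have hp := hle' p
  rcases h1 with ⟨rfl, rfl⟩ | ⟨rfl, rfl⟩ <;> rcases h2 with ⟨rfl, rfl⟩ | ⟨rfl, rfl⟩ <;>
    simp [Finsupp.single_apply, hpq, hpr, Ne.symm hpq, Ne.symm hpr] at hp

/-- Neither `x y₁² z₁` nor `x y_n² z₂` belongs to `I(G)²`. -/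
theorem not_mem_anticycle_sq (K : Type*) [Field K] (n : ℕ) (hn : 2 ≤ n) :
    ((X (vx n) * X (vy n ⟨0, by omega⟩) * X (vy n ⟨0, by omega⟩) * X (vz1 n) :
        MvPolynomial (Fin (n + 3)) K) ∉ anticycleIdeal K (n + 3) ^ 2) ∧
    ((X (vx n) * X (vy n ⟨n - 1, by omega⟩) * X (vy n ⟨n - 1, by omega⟩) * X (vz2 n) :
        MvPolynomial (Fin (n + 3)) K) ∉ anticycleIdeal K (n + 3) ^ 2) := by
  constructor
  · refine not_mem_sq_aux K (n + 3) (vx n) (vy n ⟨0, by omega⟩) (vz1 n) ?_ ?_ ?_ ?_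
    · simp [vx, vy, Fin.ext_iff]
    · simp [vx, vz1, Fin.ext_iff]
    · simp [vy, vz1, Fin.ext_iff]
    · rintro a b ⟨hne, h1, h2⟩ (rfl | rfl | rfl) (rfl | rfl | rfl)
      · exact absurd rfl hne
      · exact Or.inl ⟨rfl, rfl⟩
      · exact absurd (show ((0:ℕ)+1) % (n+3) = 1 from Nat.mod_eq_of_lt (by omega)) h1
      · exact Or.inr ⟨rfl, rfl⟩
      · exact absurd rfl hne
      · exact absurd (show ((1:ℕ)+1) % (n+3) = 0+2 from Nat.mod_eq_of_lt (by omega)) h2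
      · exact absurd (show ((0:ℕ)+1) % (n+3) = 1 from Nat.mod_eq_of_lt (by omega)) h2
      · exact absurd (show ((1:ℕ)+1) % (n+3) = 0+2 from Nat.mod_eq_of_lt (by omega)) h1
      · exact absurd rfl hne
  · refine not_mem_sq_aux K (n + 3) (vx n) (vy n ⟨n - 1, by omega⟩) (vz2 n) ?_ ?_ ?_ ?_
    · simp [vx, vy, Fin.ext_iff]
    · simp [vx, vz2, Fin.ext_iff]
    · exact Fin.ne_of_val_ne (show n-1+2 ≠ n+2 by omega)
    · have key : ((n - 1 + 2) + 1) % (n + 3) = n + 2 := by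
        have h : (n - 1 + 2) + 1 = n + 2 := by omega
        rw [h]; exact Nat.mod_eq_of_lt (by omega)
      rintro a b ⟨hne, h1, h2⟩ (rfl | rfl | rfl) (rfl | rfl | rfl)
      · exact absurd rfl hne
      · exact Or.inl ⟨rfl, rfl⟩
      · exact absurd (Nat.mod_self (n + 3)) h2
      · exact Or.inr ⟨rfl, rfl⟩
      · exact absurd rfl hne
      · exact absurd key h1
      · exact absurd (Nat.mod_self (n + 3)) h1
      · exact absurd key h2
      · exact absurd rfl hne
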